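/- Let V_1, V_2 > 0, let φ_1, φ_2 be independent random variables each uniformly distributed on [0, 2π), let h = V_1 e^{jφ_1} + V_2 e^{jφ_2}, and let γ = γ̄ |h|² / (V_1² + V_2²) with γ̄ > 0 and Δ = 2V_1V_2/(V_1² + V_2²). Then the law of γ is absolutely continuous with respect to Lebesgue measure with density f_γ(x) = 1 / (π γ̄ √(Δ² − (1 − x/γ̄)²)) for γ̄(1−Δ) < x < γ̄(1+Δ), and f_γ(x) = 0 outside this interval. -/

import Mathlib

open MeasureTheory ProbabilityTheory Real Complex
open scoped ENNReal

/-- The uniform distribution on `[0, 2π)`. -/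
noncomputable def uniformPhase : Measure ℝ :=
  (ENNReal.ofReal (2 * Real.pi))⁻¹ • (volume.restrict (Set.Ico 0 (2 * Real.pi)))

lemma uniformPhase_apply {A : Set ℝ} (hA : MeasurableSet A) :
    uniformPhase A = (ENNReal.ofReal (2 * Real.pi))⁻¹ * volume (A ∩ Set.Ico 0 (2 * Real.pi)) := by
  simp [uniformPhase, Measure.smul_apply, Measure.restrict_apply hA, smul_eq_mul]

lemma twoPi_ofReal_ne_zero : ENNReal.ofReal (2 * Real.pi) ≠ 0 := by
  exact (ENNReal.ofReal_pos.2 Real.two_pi_pos).ne'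

instance : IsProbabilityMeasure uniformPhase := by
  constructor
  rw [uniformPhase_apply MeasurableSet.univ, Set.univ_inter, Real.volume_Ico]
  simp only [sub_zero]
  exact ENNReal.inv_mul_cancel twoPi_ofReal_ne_zero ENNReal.ofReal_ne_top

lemma volume_image_eq_lintegral_abs_deriv {s : Set ℝ} {f f' : ℝ → ℝ} (hs : MeasurableSet s)
    (hf' : ∀ x ∈ s, HasDerivWithinAt f (f' x) s x) (hf : Set.InjOn f s) :
    volume (f '' s) = ∫⁻ x in s, ENNReal.ofReal |f' x| := by
  have h := lintegral_image_eq_lintegral_abs_det_fderiv_mul volume hs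
    (fun x hx => (hf' x hx).hasFDerivWithinAt) hf (fun _ => 1)
  simpa [ContinuousLinearMap.det_toSpanSingleton, setLIntegral_one, mul_one] using h

lemma periodic_shift_measure {B : Set ℝ} (hB : MeasurableSet B)
    (hper : ∀ x, x ∈ B ↔ x + 2 * π ∈ B) {a : ℝ} (ha : a ∈ Set.Ico 0 (2 * π)) :
    volume ((fun b => a - b) ⁻¹' B ∩ Set.Ico 0 (2 * π)) = volume (B ∩ Set.Ico 0 (2 * π)) := by
  obtain ⟨ha0, ha2⟩ := ha
  have h1 : (fun b => a - b) ⁻¹' B ∩ Set.Ico 0 (2 * π)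
      = (fun b : ℝ => a - b) ⁻¹' (B ∩ Set.Ioc (a - 2 * π) a) := by
    ext b
    simp only [Set.mem_inter_iff, Set.mem_preimage, Set.mem_Ico, Set.mem_Ioc]
    constructor
    · rintro ⟨h, h0, h2⟩; exact ⟨h, by linarith, by linarith⟩
    · rintro ⟨h, h0, h2⟩; exact ⟨h, by linarith, by linarith⟩
  have h2 : volume ((fun b : ℝ => a - b) ⁻¹' (B ∩ Set.Ioc (a - 2 * π) a))
      = volume (B ∩ Set.Ioc (a - 2 * π) a) := by
    have hcomp : (fun b : ℝ => a - b) ⁻¹' (B ∩ Set.Ioc (a - 2 * π) a)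
        = (fun b : ℝ => -b) ⁻¹' ((fun x : ℝ => a + x) ⁻¹' (B ∩ Set.Ioc (a - 2 * π) a)) := by
      ext b; simp only [Set.mem_preimage, sub_eq_add_neg]
    rw [hcomp, Measure.measure_preimage_neg, measure_preimage_add]
  have h4 : volume (B ∩ Set.Ioc (a - 2 * π) 0) = volume (B ∩ Set.Ioc a (2 * π)) := by
    have hpre : (fun x : ℝ => x + 2 * π) ⁻¹' (B ∩ Set.Ioc a (2 * π))
        = B ∩ Set.Ioc (a - 2 * π) 0 := by
      ext x
      simp only [Set.mem_preimage, Set.mem_inter_iff, Set.mem_Ioc]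
      constructor
      · rintro ⟨h, h0, h2⟩; exact ⟨(hper x).2 h, by linarith, by linarith⟩
      · rintro ⟨h, h0, h2⟩; exact ⟨(hper x).1 h, by linarith, by linarith⟩
    rw [← hpre, measure_preimage_add_right]
  have hsplit1 : volume (B ∩ Set.Ioc (a - 2 * π) a)
      = volume (B ∩ Set.Ioc (a - 2 * π) 0) + volume (B ∩ Set.Ioc 0 a) := by
    rw [← Set.Ioc_union_Ioc_eq_Ioc (by linarith : a - 2 * π ≤ 0) ha0, Set.inter_union_distrib_left]
    exact measure_union ((Set.Ioc_disjoint_Ioc_of_le le_rfl).mono Set.inter_subset_right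
      Set.inter_subset_right) (hB.inter measurableSet_Ioc)
  have hsplit2 : volume (B ∩ Set.Ioc 0 (2 * π))
      = volume (B ∩ Set.Ioc 0 a) + volume (B ∩ Set.Ioc a (2 * π)) := by
    rw [← Set.Ioc_union_Ioc_eq_Ioc ha0 ha2.le, Set.inter_union_distrib_left]
    exact measure_union ((Set.Ioc_disjoint_Ioc_of_le le_rfl).mono Set.inter_subset_right
      Set.inter_subset_right) (hB.inter measurableSet_Ioc)
  have hico : volume (B ∩ Set.Ico 0 (2 * π)) = volume (B ∩ Set.Ioc 0 (2 * π)) :=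
    measure_congr (Filter.EventuallyEq.rfl.inter Ico_ae_eq_Ioc)
  rw [h1, h2, hsplit1, h4, hico, hsplit2, add_comm]

lemma u_mem {γbar Δ : ℝ} (hγbar : 0 < γbar) (hΔ0 : 0 < Δ) {x : ℝ}
    (hx : x ∈ Set.Ioo (γbar * (1 - Δ)) (γbar * (1 + Δ))) :
    (x / γbar - 1) / Δ ∈ Set.Ioo (-1 : ℝ) 1 := by
  obtain ⟨h1, h2⟩ := hx
  have e : (x / γbar - 1) / Δ * Δ * γbar = x - γbar := by field_simp
  constructor
  · nlinarith [mul_pos hΔ0 hγbar]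
  · nlinarith [mul_pos hΔ0 hγbar]

lemma sq_pos_of_mem {γbar Δ : ℝ} (hγbar : 0 < γbar) (hΔ0 : 0 < Δ) {x : ℝ}
    (hx : x ∈ Set.Ioo (γbar * (1 - Δ)) (γbar * (1 + Δ))) :
    0 < Δ ^ 2 - (1 - x / γbar) ^ 2 := by
  obtain ⟨hu1, hu2⟩ := u_mem hγbar hΔ0 hx
  have e : Δ ^ 2 - (1 - x / γbar) ^ 2 = Δ ^ 2 * (1 - ((x / γbar - 1) / Δ) ^ 2) := by
    field_simp; ring
  rw [e]
  exact mul_pos (pow_pos hΔ0 2) (by nlinarith)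

lemma map_cos_uniformPhase {γbar Δ : ℝ} (hγbar : 0 < γbar) (hΔ0 : 0 < Δ) :
    Measure.map (fun θ => γbar * (1 + Δ * Real.cos θ)) uniformPhase =
      volume.withDensity (fun x =>
        if γbar * (1 - Δ) < x ∧ x < γbar * (1 + Δ) then
          ENNReal.ofReal (1 / (Real.pi * γbar * Real.sqrt (Δ ^ 2 - (1 - x / γbar) ^ 2)))
        else 0) := by
  have hγ' : γbar ≠ 0 := hγbar.ne'
  have hΔ' : Δ ≠ 0 := hΔ0.ne'
  set l := γbar * (1 - Δ) with hl
  set r := γbar * (1 + Δ) with hr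
  set c : ℝ → ℝ := fun θ => γbar * (1 + Δ * Real.cos θ) with hcdef
  have hcmeas : Measurable c := by fun_prop
  set u : ℝ → ℝ := fun x => (x / γbar - 1) / Δ with hudef
  set g₁ : ℝ → ℝ := fun x => Real.arccos (u x) with hg₁def
  set g₂ : ℝ → ℝ := fun x => 2 * π - Real.arccos (u x) with hg₂def
  set d : ℝ → ℝ := fun x => -(1 / Real.sqrt (1 - u x ^ 2)) * (1 / γbar / Δ) with hddef
  have hu' : ∀ x, HasDerivAt u (1 / γbar / Δ) x := fun x => by
    simpa using (((hasDerivAt_id x).div_const γbar).sub_const 1).div_const Δ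
  have hd : ∀ x ∈ Set.Ioo l r, HasDerivAt g₁ (d x) x := fun x hx => by
    have hm := u_mem hγbar hΔ0 hx
    have := (Real.hasDerivAt_arccos (ne_of_gt hm.1) (ne_of_lt hm.2)).comp x (hu' x)
    exact this
  have habs : ∀ x ∈ Set.Ioo l r,
      |d x| = 1 / (γbar * Real.sqrt (Δ ^ 2 - (1 - x / γbar) ^ 2)) := by
    intro x hx
    have hq := sq_pos_of_mem hγbar hΔ0 hx
    set q := Real.sqrt (Δ ^ 2 - (1 - x / γbar) ^ 2) with hqdef
    have hqpos : 0 < q := Real.sqrt_pos.2 hq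
    have h1u : 1 - u x ^ 2 = (Δ ^ 2 - (1 - x / γbar) ^ 2) / Δ ^ 2 := by
      simp only [hudef]; field_simp; ring
    have hsq : Real.sqrt (1 - u x ^ 2) = q / Δ := by
      rw [h1u, hqdef, Real.sqrt_div hq.le, Real.sqrt_sq hΔ0.le]
    have hdx : d x = -(1 / (γbar * q)) := by
      simp only [hddef, hsq, one_div_div]
      field_simp
    rw [hdx, abs_neg, _root_.abs_of_nonneg (by positivity)]
  have huinj : ∀ x ∈ Set.Ioo l r, ∀ y ∈ Set.Ioo l r, u x = u y → x = y := by
    intro x _ y _ h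
    have h' : (x / γbar - 1) / Δ = (y / γbar - 1) / Δ := h
    field_simp at h'
    linarith
  have hinj₁ : Set.InjOn g₁ (Set.Ioo l r) := by
    intro x hx y hy hxy
    have hux := u_mem hγbar hΔ0 hx
    have huy := u_mem hγbar hΔ0 hy
    have h : u x = u y := by
      have := congrArg Real.cos hxy
      rwa [Real.cos_arccos hux.1.le hux.2.le, Real.cos_arccos huy.1.le huy.2.le] at this
    exact huinj x hx y hy h
  have hinj₂ : Set.InjOn g₂ (Set.Ioo l r) := by
    intro x hx y hy hxy
    have h : g₁ x = g₁ y := by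
      simp only [hg₂def] at hxy; simp only [hg₁def]; linarith
    exact hinj₁ hx hy h
  have harc_mem : ∀ x ∈ Set.Ioo l r, Real.arccos (u x) ∈ Set.Ioo 0 π := by
    intro x hx
    have hm := u_mem hγbar hΔ0 hx
    refine ⟨Real.arccos_pos.2 hm.2, ?_⟩
    refine lt_of_le_of_ne (Real.arccos_le_pi _) fun h => ?_
    have := Real.arccos_eq_pi.1 h
    linarith [hm.1]
  have hcg : ∀ x ∈ Set.Ioo l r, c (g₁ x) = x := by
    intro x hx
    have hm := u_mem hγbar hΔ0 hx
    simp only [hcdef, hg₁def]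
    rw [Real.cos_arccos hm.1.le hm.2.le]
    show γbar * (1 + Δ * ((x / γbar - 1) / Δ)) = x
    field_simp
    ring
  ext s hs
  -- image identities
  have him₁ : c ⁻¹' s ∩ Set.Ioo 0 π = g₁ '' (s ∩ Set.Ioo l r) := by
    ext θ
    simp only [Set.mem_inter_iff, Set.mem_preimage, Set.mem_image, Set.mem_Ioo]
    constructor
    · rintro ⟨hθs, hθ1, hθ2⟩
      have hc1 : Real.cos θ < 1 := by
        have := Real.strictAntiOn_cos (Set.mem_Icc.2 ⟨le_rfl, Real.pi_pos.le⟩)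
          (Set.mem_Icc.2 ⟨hθ1.le, hθ2.le⟩) hθ1
        simpa using this
      have hc2 : -1 < Real.cos θ := by
        have := Real.strictAntiOn_cos (Set.mem_Icc.2 ⟨hθ1.le, hθ2.le⟩)
          (Set.mem_Icc.2 ⟨Real.pi_pos.le, le_rfl⟩) hθ2
        simpa [Real.cos_pi] using this
      have hmem : c θ ∈ Set.Ioo l r := by
        constructor
        · show l < c θ; simp only [hcdef, hl]
          nlinarith [mul_pos (mul_pos hγbar hΔ0) (by linarith : (0:ℝ) < Real.cos θ + 1)]
        · show c θ < r; simp only [hcdef, hr]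
          nlinarith [mul_pos (mul_pos hγbar hΔ0) (by linarith : (0:ℝ) < 1 - Real.cos θ)]
      refine ⟨c θ, ⟨hθs, hmem.1, hmem.2⟩, ?_⟩
      have huc : u (c θ) = Real.cos θ := by
        simp only [hudef, hcdef]; field_simp; ring
      simp only [hg₁def, huc]
      exact Real.arccos_cos hθ1.le hθ2.le
    · rintro ⟨x, ⟨hxs, hx1, hx2⟩, rfl⟩
      have hmem := harc_mem x ⟨hx1, hx2⟩
      refine ⟨?_, hmem.1, hmem.2⟩
      rw [hcg x ⟨hx1, hx2⟩]; exact hxs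
  have him₂ : c ⁻¹' s ∩ Set.Ioo π (2 * π) = g₂ '' (s ∩ Set.Ioo l r) := by
    ext θ
    simp only [Set.mem_inter_iff, Set.mem_preimage, Set.mem_image, Set.mem_Ioo]
    constructor
    · rintro ⟨hθs, hθ1, hθ2⟩
      have hψ1 : 0 < 2 * π - θ := by linarith
      have hψ2 : 2 * π - θ < π := by linarith
      have hcosψ : Real.cos (2 * π - θ) = Real.cos θ := Real.cos_two_pi_sub θ
      have hc1 : Real.cos θ < 1 := by
        have := Real.strictAntiOn_cos (Set.mem_Icc.2 ⟨le_rfl, Real.pi_pos.le⟩)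
          (Set.mem_Icc.2 ⟨hψ1.le, hψ2.le⟩) hψ1
        rw [hcosψ] at this; simpa using this
      have hc2 : -1 < Real.cos θ := by
        have := Real.strictAntiOn_cos (Set.mem_Icc.2 ⟨hψ1.le, hψ2.le⟩)
          (Set.mem_Icc.2 ⟨Real.pi_pos.le, le_rfl⟩) hψ2
        rw [hcosψ] at this; simpa [Real.cos_pi] using this
      have hmem : c θ ∈ Set.Ioo l r := by
        constructor
        · show l < c θ; simp only [hcdef, hl]
          nlinarith [mul_pos (mul_pos hγbar hΔ0) (by linarith : (0:ℝ) < Real.cos θ + 1)]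
        · show c θ < r; simp only [hcdef, hr]
          nlinarith [mul_pos (mul_pos hγbar hΔ0) (by linarith : (0:ℝ) < 1 - Real.cos θ)]
      refine ⟨c θ, ⟨hθs, hmem.1, hmem.2⟩, ?_⟩
      have huc : u (c θ) = Real.cos θ := by
        simp only [hudef, hcdef]; field_simp; ring
      simp only [hg₂def, huc, ← hcosψ]
      rw [Real.arccos_cos hψ1.le hψ2.le]
      ring
    · rintro ⟨x, ⟨hxs, hx1, hx2⟩, rfl⟩
      have hmem := harc_mem x ⟨hx1, hx2⟩
      have hm := u_mem hγbar hΔ0 (⟨hx1, hx2⟩ : x ∈ Set.Ioo l r)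
      refine ⟨?_, by simp only [hg₂def]; constructor <;> [linarith [hmem.2]; linarith [hmem.1]]⟩
      have : c (g₂ x) = x := by
        simp only [hcdef, hg₂def]
        rw [Real.cos_two_pi_sub, Real.cos_arccos hm.1.le hm.2.le]
        show γbar * (1 + Δ * ((x / γbar - 1) / Δ)) = x
        field_simp
        ring
      rw [this]; exact hxs
  -- measure computation
  have hT : MeasurableSet (s ∩ Set.Ioo l r) := hs.inter measurableSet_Ioo
  have hA : MeasurableSet (c ⁻¹' s) := hcmeas hs
  have hvol₁ : volume (c ⁻¹' s ∩ Set.Ioo 0 π)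
      = ∫⁻ x in s ∩ Set.Ioo l r, ENNReal.ofReal |d x| := by
    rw [him₁]
    exact volume_image_eq_lintegral_abs_deriv hT
      (fun x hx => (hd x hx.2).hasDerivWithinAt) (hinj₁.mono Set.inter_subset_right)
  have hvol₂ : volume (c ⁻¹' s ∩ Set.Ioo π (2 * π))
      = ∫⁻ x in s ∩ Set.Ioo l r, ENNReal.ofReal |d x| := by
    rw [him₂]
    have h2 : volume (g₂ '' (s ∩ Set.Ioo l r))
        = ∫⁻ x in s ∩ Set.Ioo l r, ENNReal.ofReal |(-(d x))| :=
      volume_image_eq_lintegral_abs_deriv hT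
        (fun x hx => ((hd x hx.2).const_sub (2 * π)).hasDerivWithinAt)
        (hinj₂.mono Set.inter_subset_right)
    simpa [abs_neg] using h2
  have hJ : ∫⁻ x in s ∩ Set.Ioo l r, ENNReal.ofReal |d x|
      = ∫⁻ x in s ∩ Set.Ioo l r,
          ENNReal.ofReal (1 / (γbar * Real.sqrt (Δ ^ 2 - (1 - x / γbar) ^ 2))) :=
    setLIntegral_congr_fun hT (fun x hx => by rw [habs x hx.2])
  have hsplit : volume (c ⁻¹' s ∩ Set.Ico 0 (2 * π))
      = volume (c ⁻¹' s ∩ Set.Ioo 0 π) + volume (c ⁻¹' s ∩ Set.Ioo π (2 * π)) := by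
    have hae : ((c ⁻¹' s ∩ Set.Ico 0 (2 * π) : Set ℝ))
        =ᵐ[volume] ((c ⁻¹' s ∩ Set.Ioo 0 π) ∪ (c ⁻¹' s ∩ Set.Ioo π (2 * π)) : Set ℝ) := by
      rw [MeasureTheory.ae_eq_set]
      constructor
      · refine measure_mono_null (fun x hx => ?_) (((Set.finite_singleton π).insert 0).measure_zero volume)
        obtain ⟨⟨hxA, hx0, hx2⟩, hxn⟩ := hx
        simp only [Set.mem_insert_iff, Set.mem_singleton_iff]
        by_contra hne
        push_neg at hne
        obtain ⟨hne0, hneπ⟩ := hne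
        apply hxn
        have h0 : 0 < x := lt_of_le_of_ne hx0 (Ne.symm hne0)
        rcases lt_trichotomy x π with h' | h' | h'
        · exact Or.inl ⟨hxA, h0, h'⟩
        · exact absurd h' hneπ
        · exact Or.inr ⟨hxA, h', hx2⟩
      · have hsub : (c ⁻¹' s ∩ Set.Ioo 0 π) ∪ (c ⁻¹' s ∩ Set.Ioo π (2 * π))
            ⊆ c ⁻¹' s ∩ Set.Ico 0 (2 * π) := by
          rintro x (⟨h1, h2⟩ | ⟨h1, h2⟩) <;>
            exact ⟨h1, by constructor <;> [linarith [h2.1, h2.2, Real.pi_pos]; linarith [h2.1, h2.2, Real.pi_pos]]⟩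
        rw [Set.diff_eq_empty.2 hsub]; exact measure_empty
    rw [measure_congr hae]
    refine measure_union ?_ (hA.inter measurableSet_Ioo)
    refine (Set.disjoint_left.2 fun x h1 h2 => ?_).mono Set.inter_subset_right Set.inter_subset_right
    exact absurd h1.2 (not_lt.2 h2.1.le)
  -- put everything together
  rw [Measure.map_apply hcmeas hs, uniformPhase_apply hA, hsplit, hvol₁, hvol₂, hJ,
    withDensity_apply _ hs]
  have hind : (fun x => if l < x ∧ x < r then
        ENNReal.ofReal (1 / (π * γbar * Real.sqrt (Δ ^ 2 - (1 - x / γbar) ^ 2))) else 0)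
      = Set.indicator (Set.Ioo l r)
          (fun x => ENNReal.ofReal (1 / (π * γbar * Real.sqrt (Δ ^ 2 - (1 - x / γbar) ^ 2)))) := by
    funext x; rw [Set.indicator_apply]
    simp [Set.mem_Ioo]
  rw [hind, lintegral_indicator measurableSet_Ioo, Measure.restrict_restrict measurableSet_Ioo,
    Set.inter_comm (Set.Ioo l r) s]
  have hmeasJ : Measurable fun x : ℝ =>
      ENNReal.ofReal (1 / (γbar * Real.sqrt (Δ ^ 2 - (1 - x / γbar) ^ 2))) := by
    fun_prop
  have hrhs : ∫⁻ x in s ∩ Set.Ioo l r,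
      ENNReal.ofReal (1 / (π * γbar * Real.sqrt (Δ ^ 2 - (1 - x / γbar) ^ 2)))
      = (ENNReal.ofReal π)⁻¹ * ∫⁻ x in s ∩ Set.Ioo l r,
          ENNReal.ofReal (1 / (γbar * Real.sqrt (Δ ^ 2 - (1 - x / γbar) ^ 2))) := by
    have hpt : ∀ x : ℝ, ENNReal.ofReal (1 / (π * γbar * Real.sqrt (Δ ^ 2 - (1 - x / γbar) ^ 2)))
        = (ENNReal.ofReal π)⁻¹
          * ENNReal.ofReal (1 / (γbar * Real.sqrt (Δ ^ 2 - (1 - x / γbar) ^ 2))) := by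
      intro x
      rw [← ENNReal.ofReal_inv_of_pos Real.pi_pos, ← ENNReal.ofReal_mul (by positivity)]
      congr 1
      rw [mul_assoc]
      rw [one_div, mul_inv]
      ring
    simp_rw [hpt]
    exact lintegral_const_mul _ hmeasJ
  rw [hrhs]
  set J := ∫⁻ x in s ∩ Set.Ioo l r,
      ENNReal.ofReal (1 / (γbar * Real.sqrt (Δ ^ 2 - (1 - x / γbar) ^ 2)))
  have h2π : ENNReal.ofReal (2 * π) = 2 * ENNReal.ofReal π := by
    rw [ENNReal.ofReal_mul (by norm_num)]; norm_num
  rw [h2π, ← two_mul,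
    ENNReal.mul_inv (Or.inl two_ne_zero) (Or.inl ENNReal.ofNat_ne_top)]
  rw [mul_mul_mul_comm, ENNReal.inv_mul_cancel two_ne_zero ENNReal.ofNat_ne_top, one_mul]
lemma gamma_eq {V₁ V₂ : ℝ} (hV₁ : 0 < V₁) (hV₂ : 0 < V₂) (γbar Δ : ℝ)
    (hΔ : Δ = 2 * V₁ * V₂ / (V₁ ^ 2 + V₂ ^ 2)) (a b : ℝ) :
    γbar * (‖(V₁ : ℂ) * Complex.exp ((a : ℂ) * Complex.I) +
        (V₂ : ℂ) * Complex.exp ((b : ℂ) * Complex.I)‖) ^ 2 / (V₁ ^ 2 + V₂ ^ 2)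
      = γbar * (1 + Δ * Real.cos (a - b)) := by
  have hsum : (0:ℝ) < V₁ ^ 2 + V₂ ^ 2 := by positivity
  have habs : (‖(V₁ : ℂ) * Complex.exp ((a : ℂ) * Complex.I) +
      (V₂ : ℂ) * Complex.exp ((b : ℂ) * Complex.I)‖) ^ 2
      = V₁ ^ 2 + V₂ ^ 2 + 2 * V₁ * V₂ * Real.cos (a - b) := by
    rw [Complex.sq_norm, Complex.normSq_apply]
    simp only [Complex.exp_mul_I, ← Complex.ofReal_cos, ← Complex.ofReal_sin,
      Complex.add_re, Complex.add_im, Complex.mul_re, Complex.mul_im,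
      Complex.ofReal_re, Complex.ofReal_im, Complex.I_re, Complex.I_im]
    rw [Real.cos_sub]
    nlinarith [Real.sin_sq_add_cos_sq a, Real.sin_sq_add_cos_sq b]
  rw [habs, hΔ]
  field_simp

lemma map_T_prod (γbar Δ : ℝ) :
    Measure.map (fun p : ℝ × ℝ => γbar * (1 + Δ * Real.cos (p.1 - p.2)))
        (uniformPhase.prod uniformPhase)
      = Measure.map (fun θ => γbar * (1 + Δ * Real.cos θ)) uniformPhase := by
  have hT : Measurable fun p : ℝ × ℝ => γbar * (1 + Δ * Real.cos (p.1 - p.2)) := by fun_prop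
  have hc : Measurable fun θ : ℝ => γbar * (1 + Δ * Real.cos θ) := by fun_prop
  ext s hs
  rw [Measure.map_apply hT hs, Measure.map_apply hc hs, Measure.prod_apply (hT hs)]
  set B := (fun θ : ℝ => γbar * (1 + Δ * Real.cos θ)) ⁻¹' s with hB
  have hBmeas : MeasurableSet B := hc hs
  have hper : ∀ x, x ∈ B ↔ x + 2 * π ∈ B := fun x => by
    simp only [hB, Set.mem_preimage, Real.cos_add_two_pi]
  have hkey : ∀ a ∈ Set.Ico (0:ℝ) (2 * π),
      uniformPhase (Prod.mk a ⁻¹' ((fun p : ℝ × ℝ =>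
        γbar * (1 + Δ * Real.cos (p.1 - p.2))) ⁻¹' s)) = uniformPhase B := by
    intro a ha
    have hpre : Prod.mk a ⁻¹' ((fun p : ℝ × ℝ =>
        γbar * (1 + Δ * Real.cos (p.1 - p.2))) ⁻¹' s) = (fun b => a - b) ⁻¹' B := rfl
    rw [hpre, uniformPhase_apply (((by fun_prop) : Measurable
      (fun b : ℝ => a - b)) hBmeas), uniformPhase_apply hBmeas,
      periodic_shift_measure hBmeas hper ha]
  have hae : ∀ᵐ a ∂uniformPhase,
      uniformPhase (Prod.mk a ⁻¹' ((fun p : ℝ × ℝ =>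
        γbar * (1 + Δ * Real.cos (p.1 - p.2))) ⁻¹' s)) = uniformPhase B := by
    have h0 : ∀ᵐ a ∂(volume.restrict (Set.Ico (0:ℝ) (2 * π))), a ∈ Set.Ico (0:ℝ) (2 * π) :=
      ae_restrict_mem measurableSet_Ico
    exact Measure.ae_smul_measure (h0.mono fun a ha => hkey a ha) _
  rw [lintegral_congr_ae hae, lintegral_const, measure_univ, mul_one]

/-- The two-wave SNR `γ = γ̄ |V₁ e^{jφ₁} + V₂ e^{jφ₂}|²/(V₁²+V₂²)`
with independent uniform phases and `Δ = 2V₁V₂/(V₁²+V₂²)` has a law that is absolutely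
continuous with respect to Lebesgue measure, with density
`x ↦ 1/(π γ̄ √(Δ² − (1 − x/γ̄)²))` on `(γ̄(1−Δ), γ̄(1+Δ))` and `0` elsewhere. -/
theorem twoWave_snr_pdf {Ω : Type*} [MeasurableSpace Ω] (μ : Measure Ω)
    [IsProbabilityMeasure μ] (V₁ V₂ : ℝ) (hV₁ : 0 < V₁) (hV₂ : 0 < V₂)
    (φ₁ φ₂ : Ω → ℝ) (hφ₁ : Measurable φ₁) (hφ₂ : Measurable φ₂)
    (hindep : IndepFun φ₁ φ₂ μ)
    (hunif₁ : Measure.map φ₁ μ = uniformPhase)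
    (hunif₂ : Measure.map φ₂ μ = uniformPhase)
    (γbar : ℝ) (hγbar : 0 < γbar)
    (γ : Ω → ℝ)
    (hγ_def : ∀ ω, γ ω = γbar *
      (‖(V₁ : ℂ) * Complex.exp ((φ₁ ω : ℂ) * Complex.I) +
        (V₂ : ℂ) * Complex.exp ((φ₂ ω : ℂ) * Complex.I)‖) ^ 2 / (V₁ ^ 2 + V₂ ^ 2))
    (Δ : ℝ) (hΔ : Δ = 2 * V₁ * V₂ / (V₁ ^ 2 + V₂ ^ 2)) :
    Measure.map γ μ =
      volume.withDensity (fun x =>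
        if γbar * (1 - Δ) < x ∧ x < γbar * (1 + Δ) then
          ENNReal.ofReal (1 / (Real.pi * γbar * Real.sqrt (Δ ^ 2 - (1 - x / γbar) ^ 2)))
        else 0) := by
  have hΔ0 : 0 < Δ := by rw [hΔ]; positivity
  have hpair : μ.map (fun ω => (φ₁ ω, φ₂ ω)) = uniformPhase.prod uniformPhase := by
    have h := (ProbabilityTheory.indepFun_iff_map_prod_eq_prod_map_map
      hφ₁.aemeasurable hφ₂.aemeasurable).mp hindep
    rw [hunif₁, hunif₂] at h
    exact h
  have hT : Measurable fun p : ℝ × ℝ => γbar * (1 + Δ * Real.cos (p.1 - p.2)) := by fun_prop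
  have hγfun : γ = (fun p : ℝ × ℝ => γbar * (1 + Δ * Real.cos (p.1 - p.2)))
      ∘ (fun ω => (φ₁ ω, φ₂ ω)) := by
    funext ω
    rw [hγ_def ω]
    exact gamma_eq hV₁ hV₂ γbar Δ hΔ (φ₁ ω) (φ₂ ω)
  rw [hγfun, ← Measure.map_map hT (hφ₁.prodMk hφ₂), hpair, map_T_prod,
    map_cos_uniformPhase hγbar hΔ0]
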